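/- Let X and X' each be real random variables with the exponential distribution of rate 1/(βΩ), where β > 0 and Ω > 0. Let P_R > 0, P_Δ > 0 and let j_0 ≤ j_1 be real numbers. Define the detection error probability P_E(τ) = P(P_R·X + j_0 > τ) + P((P_R + P_Δ)·X' + j_1 < τ). Then P_E(τ) = 1 if τ < j_0; P_E(τ) = exp((j_0 − τ)/(β·P_R·Ω)) if j_0 ≤ τ < j_1; and P_E(τ) = 1 + exp((j_0 − τ)/(β·P_R·Ω)) − exp((j_1 − τ)/(β·(P_R + P_Δ)·Ω)) if τ ≥ j_1. -/

import Mathlib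

open MeasureTheory ProbabilityTheory Real Set

lemma expMeasure_Iic_eq {r : ℝ} (hr : 0 < r) (x : ℝ) :
    expMeasure r (Iic x) = ENNReal.ofReal (if 0 ≤ x then 1 - exp (-(r*x)) else 0) := by
  have h1 : IsProbabilityMeasure (expMeasure r) := isProbabilityMeasure_expMeasure hr
  have h2 := (cdf_eq_real (μ := expMeasure r) x).trans (measureReal_def _ _)
  have h3 : (cdf (expMeasure r)) x = if 0 ≤ x then 1 - exp (-(r*x)) else 0 :=
    cdf_expMeasure_eq hr x
  have hne : expMeasure r (Iic x) ≠ ⊤ := measure_ne_top _ _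
  rw [← ENNReal.ofReal_toReal hne, ← h2, h3]

lemma expMeasure_Iio_eq {r : ℝ} (hr : 0 < r) (x : ℝ) :
    expMeasure r (Iio x) = ENNReal.ofReal (if 0 ≤ x then 1 - exp (-(r*x)) else 0) := by
  have hsing : expMeasure r {x} = 0 := by
    rw [expMeasure, gammaMeasure, MeasureTheory.withDensity_apply _ (measurableSet_singleton x)]
    simp
  have hIic : expMeasure r (Iic x) = expMeasure r (Iio x) := by
    refine le_antisymm ?_ (measure_mono Iio_subset_Iic_self)
    calc expMeasure r (Iic x) = expMeasure r (Iio x ∪ {x}) := by rw [Iio_union_right]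
    _ ≤ expMeasure r (Iio x) + expMeasure r {x} := measure_union_le _ _
    _ = expMeasure r (Iio x) := by rw [hsing, add_zero]
  rw [← hIic, expMeasure_Iic_eq hr]

lemma expMeasure_Ioi_toReal {r : ℝ} (hr : 0 < r) (x : ℝ) :
    (expMeasure r (Ioi x)).toReal = if 0 ≤ x then exp (-(r*x)) else 1 := by
  have h1 : IsProbabilityMeasure (expMeasure r) := isProbabilityMeasure_expMeasure hr
  have h2 : expMeasure r (Ioi x) = 1 - expMeasure r (Iic x) := by
    rw [← prob_compl_eq_one_sub measurableSet_Iic, compl_Iic]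
  rw [h2, expMeasure_Iic_eq hr]
  split_ifs with h
  · have he : exp (-(r*x)) ≤ 1 := exp_le_one_iff.2 (by nlinarith)
    have h01 : (0:ℝ) ≤ 1 - exp (-(r*x)) := by linarith
    rw [show (1:ENNReal) = ENNReal.ofReal 1 by simp,
      ← ENNReal.ofReal_sub _ h01,
      show (1:ℝ) - (1 - exp (-(r*x))) = exp (-(r*x)) by ring,
      ENNReal.toReal_ofReal (exp_pos _).le]
  · simp

lemma expMeasure_Iio_toReal {r : ℝ} (hr : 0 < r) (x : ℝ) :
    (expMeasure r (Iio x)).toReal = if 0 ≤ x then 1 - exp (-(r*x)) else 0 := by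
  rw [expMeasure_Iio_eq hr]
  split_ifs with h
  · exact ENNReal.toReal_ofReal (by nlinarith [exp_le_one_iff.2 (show -(r*x) ≤ 0 by nlinarith)])
  · simp


/-- With `X`, `X'` exponentially distributed with rate `1/(β·Ω)`,
`β, Ω, P_R, P_Δ > 0` and `j₀ ≤ j₁`, the detection error probability
`P_E(τ) = P(P_R·X + j₀ > τ) + P((P_R+P_Δ)·X' + j₁ < τ)` satisfies the closed form:
`1` for `τ < j₀`; `exp((j₀−τ)/(β·P_R·Ω))` for `j₀ ≤ τ < j₁`; and
`1 + exp((j₀−τ)/(β·P_R·Ω)) − exp((j₁−τ)/(β·(P_R+P_Δ)·Ω))` for `τ ≥ j₁`. -/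
theorem detection_error_probability
    {α : Type*} [MeasureSpace α] [IsProbabilityMeasure (ℙ : Measure α)]
    (X X' : α → ℝ) (hXm : Measurable X) (hX'm : Measurable X')
    (β Ω P_R P_Δ j₀ j₁ : ℝ) (hβ : 0 < β) (hΩ : 0 < Ω) (hPR : 0 < P_R) (hPΔ : 0 < P_Δ)
    (hj : j₀ ≤ j₁)
    (hX : Measure.map X ℙ = expMeasure (1 / (β * Ω)))
    (hX' : Measure.map X' ℙ = expMeasure (1 / (β * Ω)))
    (P_E : ℝ → ℝ)
    (hPE : ∀ τ, P_E τ = (ℙ {ω | P_R * X ω + j₀ > τ}).toReal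
        + (ℙ {ω | (P_R + P_Δ) * X' ω + j₁ < τ}).toReal) :
    ∀ τ : ℝ,
      (τ < j₀ → P_E τ = 1) ∧
      (j₀ ≤ τ → τ < j₁ → P_E τ = exp ((j₀ - τ) / (β * P_R * Ω))) ∧
      (τ ≥ j₁ → P_E τ = 1 + exp ((j₀ - τ) / (β * P_R * Ω))
          - exp ((j₁ - τ) / (β * (P_R + P_Δ) * Ω))) := by
  intro τ
  have hr : 0 < 1 / (β * Ω) := by positivity
  have hA : (ℙ {ω | P_R * X ω + j₀ > τ}).toReal
      = if 0 ≤ (τ - j₀)/P_R then exp (-(1/(β*Ω) * ((τ-j₀)/P_R))) else 1 := by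
    have hset : {ω | P_R * X ω + j₀ > τ} = X ⁻¹' Set.Ioi ((τ - j₀)/P_R) := by
      ext ω
      simp only [Set.mem_setOf_eq, Set.mem_preimage, Set.mem_Ioi, gt_iff_lt, div_lt_iff₀ hPR]
      constructor <;> intro h <;> nlinarith
    rw [hset, ← Measure.map_apply hXm measurableSet_Ioi, hX, expMeasure_Ioi_toReal hr]
  have hB : (ℙ {ω | (P_R + P_Δ) * X' ω + j₁ < τ}).toReal
      = if 0 ≤ (τ - j₁)/(P_R+P_Δ) then 1 - exp (-(1/(β*Ω) * ((τ-j₁)/(P_R+P_Δ)))) else 0 := by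
    have hP : 0 < P_R + P_Δ := by linarith
    have hset : {ω | (P_R + P_Δ) * X' ω + j₁ < τ} = X' ⁻¹' Set.Iio ((τ - j₁)/(P_R+P_Δ)) := by
      ext ω
      simp only [Set.mem_setOf_eq, Set.mem_preimage, Set.mem_Iio, lt_div_iff₀ hP]
      constructor <;> intro h <;> nlinarith
    rw [hset, ← Measure.map_apply hX'm measurableSet_Iio, hX', expMeasure_Iio_toReal hr]
  have hP : 0 < P_R + P_Δ := by linarith
  have e1 : -(1/(β*Ω) * ((τ-j₀)/P_R)) = (j₀ - τ) / (β * P_R * Ω) := by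
    rw [eq_div_iff (by positivity)]; field_simp; ring_nf
  have e2 : -(1/(β*Ω) * ((τ-j₁)/(P_R+P_Δ))) = (j₁ - τ) / (β * (P_R + P_Δ) * Ω) := by
    rw [eq_div_iff (by positivity)]; field_simp; ring_nf
  refine ⟨fun h => ?_, fun h1 h2 => ?_, fun h => ?_⟩
  · rw [hPE, hA, hB, if_neg (by rw [not_le]; exact div_neg_of_neg_of_pos (by linarith) hPR),
      if_neg (by rw [not_le]; exact div_neg_of_neg_of_pos (by linarith) hP)]
    norm_num
  · rw [hPE, hA, hB, if_pos (div_nonneg (by linarith) hPR.le),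
      if_neg (by rw [not_le]; exact div_neg_of_neg_of_pos (by linarith) hP), e1]
    norm_num
  · rw [hPE, hA, hB, if_pos (div_nonneg (by linarith) hPR.le), if_pos (div_nonneg (by linarith) hP.le), e1, e2]
    ring
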